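/- arXiv:2211.16067 — 3 statements merged into one kernel-verified Lean document; each statement's English description precedes it below -/
import Mathlib

section
/- Let p be a prime with p ≥ 5. Then there exist a, b ∈ ℚ_p with a·b = p such that for every nonzero u ∈ ℚ_p, it is not the case that both u^(p−1)·a and u^(1−p)·b lie in ℤ_p (i.e. have p-adic norm ≤ 1). Consequently, the restriction map from the set {(a,b) ∈ ℤ_p² : ab = p} modulo the equivalence (a,b) ∼ (c,d) ⟺ ∃ u ∈ ℤ_pˣ with c = u^(p−1)a and d = u^(1−p)b, to the set {(a,b) ∈ ℚ_p² : ab = p} modulo the analogous equivalence with u ∈ ℚ_pˣ, is not surjective. -/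
/-- Oort–Tate pairs over a commutative ring `A` (for the prime `p`):
pairs `(a, b) ∈ A²` with `a·b = p`. -/
def OortTatePair (A : Type*) [CommRing A] (p : ℕ) : Type _ :=
  {x : A × A // x.1 * x.2 = (p : A)}

/-- The Oort–Tate equivalence: `(a,b) ∼ (c,d)` iff there is a unit `u` with
`c = u^(p−1)·a` and `d = u^(1−p)·b`. -/
def OortTateRel (A : Type*) [CommRing A] (p : ℕ) (x y : OortTatePair A p) : Prop :=
  ∃ u : Aˣ, y.val.1 = (↑(u ^ ((p : ℤ) - 1)) : A) * x.val.1 ∧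
            y.val.2 = (↑(u ^ ((1 : ℤ) - (p : ℤ))) : A) * x.val.2

theorem OortTateRel.iseqv (A : Type*) [CommRing A] (p : ℕ) :
    Equivalence (OortTateRel A p) := by
  have key : ∀ (u : Aˣ) (e : ℤ) (a : A), (↑(u⁻¹ ^ e) : A) * ((↑(u ^ e) : A) * a) = a := by
    intro u e a
    rw [← mul_assoc, ← Units.val_mul, ← mul_zpow, inv_mul_cancel, one_zpow,
      Units.val_one, one_mul]
  constructor
  · intro x
    exact ⟨1, by simp, by simp⟩
  · rintro x y ⟨u, h1, h2⟩
    exact ⟨u⁻¹, by rw [h1, key], by rw [h2, key]⟩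
  · rintro x y z ⟨u, h1, h2⟩ ⟨v, h3, h4⟩
    refine ⟨v * u, ?_, ?_⟩ <;>
      · rw [mul_zpow, Units.val_mul, mul_assoc]
        first
        | rw [h3, h1]
        | rw [h4, h2]

/-- The setoid of Oort–Tate pairs. -/
def OortTateSetoid (A : Type*) [CommRing A] (p : ℕ) : Setoid (OortTatePair A p) :=
  ⟨OortTateRel A p, OortTateRel.iseqv A p⟩

/-- Isomorphism classes of group schemes of order `p` over `A` à la Oort–Tate:
pairs `(a,b)` with `a·b = p`, modulo the Oort–Tate equivalence. -/
def OortTateClasses (A : Type*) [CommRing A] (p : ℕ) : Type _ :=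
  Quotient (OortTateSetoid A p)

/-- The restriction map `φ` from Oort–Tate classes over `ℤ_p` to Oort–Tate classes
over `ℚ_p`, induced by the inclusion `ℤ_p ⊆ ℚ_p`. -/
noncomputable def oortTateRestriction (p : ℕ) [Fact p.Prime] :
    OortTateClasses ℤ_[p] p → OortTateClasses ℚ_[p] p :=
  Quotient.map
    (fun x => ⟨((x.val.1 : ℚ_[p]), (x.val.2 : ℚ_[p])), by
      rw [← PadicInt.coe_mul, x.property, PadicInt.coe_natCast]⟩)
    (by
      rintro x y ⟨u, h1, h2⟩
      refine ⟨Units.map (PadicInt.Coe.ringHom (p := p)).toMonoidHom u, ?_, ?_⟩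
      · show ((y.val.1 : ℚ_[p])) = _
        rw [← map_zpow, Units.coe_map, h1, PadicInt.coe_mul]
        rfl
      · show ((y.val.2 : ℚ_[p])) = _
        rw [← map_zpow, Units.coe_map, h2, PadicInt.coe_mul]
        rfl)

lemma padic_valuation_pow {p : ℕ} [Fact p.Prime] (x : ℚ_[p]) (hx : x ≠ 0) (n : ℕ) :
    (x ^ n).valuation = n * x.valuation := by
  induction n with
  | zero => simp [Padic.valuation_one]
  | succ n ih =>
    rw [pow_succ, Padic.valuation_mul (pow_ne_zero _ hx) hx, ih]
    push_cast; ring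

lemma padic_valuation_inv {p : ℕ} [Fact p.Prime] (x : ℚ_[p]) (hx : x ≠ 0) :
    (x⁻¹).valuation = -x.valuation := by
  have h : (x * x⁻¹).valuation = x.valuation + (x⁻¹).valuation :=
    Padic.valuation_mul hx (inv_ne_zero hx)
  rw [mul_inv_cancel₀ hx, Padic.valuation_one] at h
  linarith

/-- **Counter-example 3.8.**
For a prime `p ≥ 5`, there exist `a, b ∈ ℚ_p` with `a·b = p` such that for every nonzero
`u ∈ ℚ_p` not both `u^(p−1)·a` and `u^(1−p)·b` lie in `ℤ_p` (have `p`-adic norm `≤ 1`).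
Consequently, the restriction map from Oort–Tate classes over `ℤ_p` to Oort–Tate classes
over `ℚ_p` is not surjective: some group scheme of order `p` over `ℚ_p` has no finite flat
model over `ℤ_p`. -/
theorem oortTateRestriction_not_surjective (p : ℕ) [Fact p.Prime] (hp : 5 ≤ p) :
    (∃ a b : ℚ_[p], a * b = (p : ℚ_[p]) ∧
      ∀ u : ℚ_[p], u ≠ 0 →
        ¬(‖u ^ ((p : ℤ) - 1) * a‖ ≤ 1 ∧ ‖u ^ ((1 : ℤ) - (p : ℤ)) * b‖ ≤ 1)) ∧
    ¬ Function.Surjective (oortTateRestriction p) := by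
  have hprime : Fact p.Prime := ‹_›
  have hp0 : (p : ℚ_[p]) ≠ 0 := Nat.cast_ne_zero.mpr hprime.out.pos.ne'
  set a : ℚ_[p] := (p : ℚ_[p]) ^ 2 with ha_def
  set b : ℚ_[p] := (p : ℚ_[p])⁻¹ with hb_def
  have hab : a * b = (p : ℚ_[p]) := by
    rw [ha_def, hb_def, pow_two, mul_assoc, mul_inv_cancel₀ hp0, mul_one]
  have ha0 : a ≠ 0 := pow_ne_zero _ hp0
  have hb0 : b ≠ 0 := inv_ne_zero hp0
  have hval_a : a.valuation = 2 := by
    rw [ha_def, padic_valuation_pow _ hp0, Padic.valuation_p]; norm_num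
  have hval_b : b.valuation = -1 := by
    rw [hb_def, padic_valuation_inv _ hp0, Padic.valuation_p]
  have key : ∀ u : ℚ_[p], u ≠ 0 →
      ¬(‖u ^ ((p : ℤ) - 1) * a‖ ≤ 1 ∧ ‖u ^ ((1 : ℤ) - (p : ℤ)) * b‖ ≤ 1) := by
    rintro u hu ⟨h1, h2⟩
    have hpe : ((p : ℤ) - 1) = ((p - 1 : ℕ) : ℤ) := by omega
    have hun : u ^ ((p : ℤ) - 1) = u ^ (p - 1) := by rw [hpe, zpow_natCast]
    have hun' : u ^ ((1 : ℤ) - (p : ℤ)) = (u ^ (p - 1))⁻¹ := by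
      rw [show (1 : ℤ) - (p : ℤ) = -((p : ℤ) - 1) by ring, zpow_neg, hpe, zpow_natCast]
    have hupow : u ^ (p - 1) ≠ 0 := pow_ne_zero _ hu
    rw [hun, Padic.norm_le_one_iff_val_nonneg,
      Padic.valuation_mul hupow ha0, padic_valuation_pow _ hu, hval_a] at h1
    rw [hun', Padic.norm_le_one_iff_val_nonneg,
      Padic.valuation_mul (inv_ne_zero hupow) hb0, padic_valuation_inv _ hupow,
      padic_valuation_pow _ hu, hval_b] at h2
    set v := u.valuation with hv_def
    have hn : (4 : ℤ) ≤ ((p - 1 : ℕ) : ℤ) := by omega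
    set n : ℤ := ((p - 1 : ℕ) : ℤ) with hn_def
    rcases le_or_gt 0 v with hv | hv
    · nlinarith
    · have hv1 : v ≤ -1 := by omega
      nlinarith
  refine ⟨⟨a, b, hab, key⟩, ?_⟩
  intro hsurj
  obtain ⟨C, hC⟩ := hsurj (Quotient.mk (OortTateSetoid ℚ_[p] p) ⟨(a, b), hab⟩)
  obtain ⟨x, rfl⟩ := Quotient.exists_rep C
  have hrel : OortTateRel ℚ_[p] p
      ⟨((x.val.1 : ℚ_[p]), (x.val.2 : ℚ_[p])), by
        rw [← PadicInt.coe_mul, x.property, PadicInt.coe_natCast]⟩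
      ⟨(a, b), hab⟩ := Quotient.exact hC
  obtain ⟨u, h1, h2⟩ := hrel
  dsimp only at h1 h2
  have hu0 : (u : ℚ_[p]) ≠ 0 := u.ne_zero
  have hw0 : ((u : ℚ_[p]))⁻¹ ≠ 0 := inv_ne_zero hu0
  refine key ((u : ℚ_[p]))⁻¹ hw0 ⟨?_, ?_⟩
  · have : ((u : ℚ_[p]))⁻¹ ^ ((p : ℤ) - 1) * a = (x.val.1 : ℚ_[p]) := by
      rw [h1, Units.val_zpow_eq_zpow_val, inv_zpow,
        inv_mul_cancel_left₀ (zpow_ne_zero _ hu0)]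
    rw [this]
    exact x.val.1.property
  · have : ((u : ℚ_[p]))⁻¹ ^ ((1 : ℤ) - (p : ℤ)) * b = (x.val.2 : ℚ_[p]) := by
      rw [h2, Units.val_zpow_eq_zpow_val, inv_zpow,
        inv_mul_cancel_left₀ (zpow_ne_zero _ hu0)]
    rw [this]
    exact x.val.2.property
end

section
/- Let p be a prime with p ≥ 5. Set a = p² and b = p⁻¹ in ℚ_p. Then a·b = p, and for every nonzero u ∈ ℚ_p at least one of u^(p−1)·p² and u^(1−p)·p⁻¹ has p-adic norm strictly greater than 1 (equivalently, does not lie in ℤ_p). In other words, no pair (c,d) ∈ ℤ_p² with cd = p satisfies c = u^(p−1)·p² and d = u^(1−p)·p⁻¹ for some u ∈ ℚ_pˣ. -/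
private lemma padic_val_zpow {p : ℕ} [Fact p.Prime] (x : ℚ_[p]) (hx : x ≠ 0) (n : ℤ) :
    (x ^ n).valuation = n * x.valuation := by
  have hxn : x ^ n ≠ 0 := zpow_ne_zero n hx
  have hp1 : (1 : ℝ) < (p : ℝ) := by exact_mod_cast (Fact.out : p.Prime).one_lt
  have hp0 : (0 : ℝ) < (p : ℝ) := lt_trans one_pos hp1
  have h : ((p : ℝ)) ^ (-(x ^ n).valuation) = (p : ℝ) ^ (-(n * x.valuation)) := by
    rw [← Padic.norm_eq_zpow_neg_valuation hxn, norm_zpow, Padic.norm_eq_zpow_neg_valuation hx, ← zpow_mul]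
    ring_nf
  have h2 : -(x ^ n).valuation = -(n * x.valuation) :=
    zpow_right_injective₀ hp0 (ne_of_gt hp1) h
  linarith [h2]

/-- **Counter-example 3.8 (explicit witness).**
Let `p ≥ 5` be a prime. Set `a = p²` and `b = p⁻¹` in `ℚ_p`. Then `a·b = p`, and for every
nonzero `u ∈ ℚ_p` at least one of `u^(p−1)·p²` and `u^(1−p)·p⁻¹` has `p`-adic norm strictly
greater than `1` (i.e. does not lie in `ℤ_p`). In other words, no pair `(c,d) ∈ ℤ_p²` with
`c·d = p` satisfies `c = u^(p−1)·p²` and `d = u^(1−p)·p⁻¹` for some `u ∈ ℚ_pˣ`. -/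
theorem oort_tate_pair_no_integral_representative
    (p : ℕ) [Fact p.Prime] (hp : 5 ≤ p) :
    ((p : ℚ_[p]) ^ 2) * ((p : ℚ_[p])⁻¹) = (p : ℚ_[p]) ∧
    (∀ u : ℚ_[p], u ≠ 0 →
      1 < ‖u ^ ((p : ℤ) - 1) * (p : ℚ_[p]) ^ 2‖ ∨
      1 < ‖u ^ ((1 : ℤ) - (p : ℤ)) * (p : ℚ_[p])⁻¹‖) ∧
    (∀ c d : ℤ_[p], c * d = (p : ℤ_[p]) →
      ∀ u : ℚ_[p]ˣ,
        ¬((c : ℚ_[p]) = (u : ℚ_[p]) ^ ((p : ℤ) - 1) * (p : ℚ_[p]) ^ 2 ∧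
          (d : ℚ_[p]) = (u : ℚ_[p]) ^ ((1 : ℤ) - (p : ℤ)) * (p : ℚ_[p])⁻¹)) := by
  have hpprime : p.Prime := Fact.out
  have hpne : (p : ℚ_[p]) ≠ 0 := Nat.cast_ne_zero.mpr hpprime.ne_zero
  have hab : ((p : ℚ_[p]) ^ 2) * ((p : ℚ_[p])⁻¹) = (p : ℚ_[p]) := by
    field_simp
  have key : ∀ u : ℚ_[p], u ≠ 0 →
      1 < ‖u ^ ((p : ℤ) - 1) * (p : ℚ_[p]) ^ 2‖ ∨
      1 < ‖u ^ ((1 : ℤ) - (p : ℤ)) * (p : ℚ_[p])⁻¹‖ := by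
    intro u hu
    by_contra hcon
    push_neg at hcon
    obtain ⟨h1, h2⟩ := hcon
    rw [Padic.norm_le_one_iff_val_nonneg] at h1 h2
    have hu1 : u ^ ((p : ℤ) - 1) ≠ 0 := zpow_ne_zero _ hu
    have hu2 : u ^ ((1 : ℤ) - (p : ℤ)) ≠ 0 := zpow_ne_zero _ hu
    have hpsq : ((p : ℚ_[p]) ^ 2).valuation = 2 := by
      have : ((p : ℚ_[p]) ^ 2) = (p : ℚ_[p]) ^ (2 : ℤ) := by rw [← zpow_natCast]; norm_num
      rw [this, padic_val_zpow _ hpne 2, Padic.valuation_p]; ring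
    have hpinv : ((p : ℚ_[p])⁻¹).valuation = -1 := by
      have : ((p : ℚ_[p])⁻¹) = (p : ℚ_[p]) ^ (-1 : ℤ) := by simp
      rw [this, padic_val_zpow _ hpne (-1), Padic.valuation_p]; ring
    rw [Padic.valuation_mul hu1 (pow_ne_zero 2 hpne), padic_val_zpow _ hu, hpsq] at h1
    rw [Padic.valuation_mul hu2 (inv_ne_zero hpne), padic_val_zpow _ hu, hpinv] at h2
    set k := u.valuation with hk
    have hp4 : (4 : ℤ) ≤ (p : ℤ) - 1 := by
      have : (5 : ℤ) ≤ (p : ℤ) := by exact_mod_cast hp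
      linarith
    -- h1 : 0 ≤ (p-1)*k + 2, h2 : 0 ≤ (1-p)*k - 1
    have hle : ((p : ℤ) - 1) * k ≤ -1 := by nlinarith
    have hge : -2 ≤ ((p : ℤ) - 1) * k := by nlinarith
    rcases le_or_gt k (-1) with hk1 | hk1
    · nlinarith
    · have : 0 ≤ k := by linarith
      nlinarith
  refine ⟨hab, key, ?_⟩
  intro c d hcd u ⟨hc, hd⟩
  have hune : (u : ℚ_[p]) ≠ 0 := Units.ne_zero u
  rcases key u hune with h | h
  · rw [← hc] at h
    exact absurd (PadicInt.norm_le_one c) (not_le.mpr h)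
  · rw [← hd] at h
    exact absurd (PadicInt.norm_le_one d) (not_le.mpr h)
end

section
/- Let A be a discrete valuation ring that is not a field, let π ∈ A be a uniformizer, let n be a positive integer whose image in A is invertible, and suppose A contains a primitive n-th root of unity ζ (i.e. there is ζ ∈ A with IsPrimitiveRoot ζ n). Then the group of A-algebra automorphisms of B = A[X]/(Xⁿ − π) is isomorphic to ℤ/nℤ; each automorphism is determined by sending the class x of X to ζᵏ·x for a unique k ∈ ℤ/nℤ. -/
open Polynomial

section Aux

variable {A : Type*} [CommRing A] [IsDomain A] [IsDiscreteValuationRing A]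

/-- `X ^ n - C π` is Eisenstein at `(π)`, hence irreducible. -/
theorem kato_irreducible (π : A) (hπ : Irreducible π) (n : ℕ) (hn : 0 < n) :
    Irreducible (X ^ n - C π : A[X]) := by
  have hprime : Prime π := hπ.prime
  have hEis : (X ^ n - C π : A[X]).IsEisensteinAt (Ideal.span {π}) := by
    constructor
    · rw [Monic.leadingCoeff (monic_X_pow_sub_C π hn.ne')]
      rw [Ideal.mem_span_singleton]
      exact fun h => hπ.not_isUnit (isUnit_of_dvd_one h)
    · intro i hi
      rw [natDegree_X_pow_sub_C] at hi
      rw [coeff_sub, coeff_X_pow, if_neg hi.ne, coeff_C]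
      split_ifs with h
      · rw [zero_sub]
        exact (Ideal.span {π}).neg_mem (Ideal.mem_span_singleton_self π)
      · simpa using (Ideal.span {π}).zero_mem
    · rw [coeff_sub, coeff_X_pow, if_neg hn.ne, coeff_C, if_pos rfl, zero_sub,
        Ideal.span_singleton_pow, Ideal.mem_span_singleton, dvd_neg, pow_two]
      intro h
      have : π ∣ 1 := (mul_dvd_mul_iff_left hπ.ne_zero).mp (by simpa using h)
      exact hπ.not_isUnit (isUnit_of_dvd_one this)
  exact hEis.irreducible ((Ideal.span_singleton_prime hπ.ne_zero).mpr hprime)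
    (monic_X_pow_sub_C π hn.ne').isPrimitive
    (by rw [natDegree_X_pow_sub_C]; exact hn)

theorem kato_prime (π : A) (hπ : Irreducible π) (n : ℕ) (hn : 0 < n) :
    Prime (X ^ n - C π : A[X]) :=
  (kato_irreducible π hπ n hn).prime

end Aux

/-- **(Kato's example, automorphism group.)**
Let `A` be a discrete valuation ring, `π ∈ A` a uniformizer, `n` a positive integer whose
image in `A` is invertible, and suppose `A` contains a primitive `n`-th root of unity `ζ`.
Then the group of `A`-algebra automorphisms of `B = A[X]/(Xⁿ − π)` is isomorphic to
`ℤ/nℤ`; each automorphism is determined by sending the class `x` of `X` to `ζᵏ·x` for a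
unique `k ∈ ℤ/nℤ`. -/
theorem aut_adjoinRoot_nthRoot_uniformizer
    (A : Type*) [CommRing A] [IsDomain A] [IsDiscreteValuationRing A]
    (π : A) (hπ : Irreducible π) (n : ℕ) (hn : 0 < n) (hinv : IsUnit (n : A))
    (ζ : A) (hζ : IsPrimitiveRoot ζ n) :
    Nonempty ((AdjoinRoot (X ^ n - C π) ≃ₐ[A] AdjoinRoot (X ^ n - C π)) ≃*
        Multiplicative (ZMod n)) ∧
    ∀ σ : AdjoinRoot (X ^ n - C π) ≃ₐ[A] AdjoinRoot (X ^ n - C π),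
      ∃! k : ZMod n,
        σ (AdjoinRoot.root (X ^ n - C π)) =
          algebraMap A (AdjoinRoot (X ^ n - C π)) ζ ^ k.val *
            AdjoinRoot.root (X ^ n - C π) := by
  letI : NeZero n := ⟨hn.ne'⟩
  set f : A[X] := X ^ n - C π with hf
  letI : IsDomain (AdjoinRoot f) := AdjoinRoot.isDomain_of_prime (kato_prime π hπ n hn)
  set B := AdjoinRoot f with hB
  have hinj : Function.Injective (algebraMap A B) := by
    rw [AdjoinRoot.algebraMap_eq]
    exact AdjoinRoot.of.injective_of_degree_ne_zero
      (show (X ^ n - C π : A[X]).degree ≠ 0 by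
        rw [degree_X_pow_sub_C hn]; exact_mod_cast hn.ne')
  set ζ' : B := algebraMap A B ζ with hζ'def
  have hζ' : IsPrimitiveRoot ζ' n := hζ.map_of_injective hinj
  have hζn : ζ' ^ n = 1 := hζ'.pow_eq_one
  set x : B := AdjoinRoot.root f with hx
  have hxn : x ^ n = algebraMap A B π := by
    have h1 : (aeval x) (X ^ n - C π) = 0 := by
      rw [hx, AdjoinRoot.aeval_eq]; exact AdjoinRoot.mk_self
    rw [map_sub, map_pow, aeval_X, aeval_C, sub_eq_zero] at h1
    exact h1
  have hx0 : x ≠ 0 := by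
    intro h
    have : algebraMap A B π = 0 := by rw [← hxn, h, zero_pow hn.ne']
    exact hπ.ne_zero (hinj (by simpa using this))
  -- every `n`-th root of `π` in `B` is `ζ'^i * x`
  have hclass : ∀ y : B, y ^ n = algebraMap A B π → ∃ i < n, y = ζ' ^ i * x := by
    intro y hy
    have hprod := X_pow_sub_C_eq_prod hζ' hn hxn
    have h0 : (X ^ n - C (algebraMap A B π)).eval y = 0 := by
      simp [hy]
    rw [hprod, eval_prod, Finset.prod_eq_zero_iff] at h0
    obtain ⟨i, hi, h⟩ := h0
    refine ⟨i, Finset.mem_range.mp hi, ?_⟩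
    simpa [sub_eq_zero] using h
  have huniq : ∀ i j : ℕ, i < n → j < n → ζ' ^ i * x = ζ' ^ j * x → i = j := by
    intro i j hi hj h
    exact hζ'.pow_inj hi hj (mul_right_cancel₀ hx0 h)
  have hmodpow : ∀ m : ℕ, ζ' ^ (m % n) = ζ' ^ m := by
    intro m
    conv_rhs => rw [← Nat.mod_add_div m n]
    rw [pow_add, pow_mul, hζn, one_pow, mul_one]
  have haux : ∀ k : ℕ, (aeval (ζ' ^ k * x)) f = 0 := by
    intro k
    show (aeval (ζ' ^ k * x)) (X ^ n - C π) = 0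
    rw [map_sub, map_pow, aeval_X, aeval_C, mul_pow, ← pow_mul, mul_comm k n,
      pow_mul, hζn, one_pow, one_mul, hxn, sub_self]
  -- the monoid hom `ZMod n →* (B →ₐ[A] B)`
  have hcommute : ∀ (g : B →ₐ[A] B) (k : ℕ) (y : B), g (ζ' ^ k * y) = ζ' ^ k * g y := by
    intro g k y
    rw [map_mul, hζ'def, ← map_pow, AlgHom.commutes, map_pow]
  let ψ₀ : Multiplicative (ZMod n) →* (B →ₐ[A] B) :=
  { toFun := fun k => AdjoinRoot.liftAlgHom f (Algebra.ofId A B) (ζ' ^ (Multiplicative.toAdd k).val * x)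
      (by rw [Algebra.toRingHom_ofId, ← aeval_def]; exact haux _)
    map_one' := AdjoinRoot.algHom_ext <| by
      simp [AdjoinRoot.liftAlgHom_root, ZMod.val_zero, hx]
    map_mul' := by
      intro a b
      refine AdjoinRoot.algHom_ext ?_
      rw [AlgHom.mul_apply]
      simp only [AdjoinRoot.liftAlgHom_root]
      rw [hcommute, AdjoinRoot.liftAlgHom_root, ← mul_assoc, ← pow_add]
      have : (Multiplicative.toAdd (a * b)).val
          = ((Multiplicative.toAdd a).val + (Multiplicative.toAdd b).val) % n := by
        rw [toAdd_mul, ZMod.val_add]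
      rw [this, hmodpow, add_comm] }
  let ψ : Multiplicative (ZMod n) →* (B ≃ₐ[A] B) :=
    (AlgEquiv.algHomUnitsEquiv A B).toMonoidHom.comp ψ₀.toHomUnits
  have hψroot : ∀ k, ψ k x = ζ' ^ (Multiplicative.toAdd k).val * x := by
    intro k
    dsimp [ψ, ψ₀, AlgEquiv.algHomUnitsEquiv]
    exact AdjoinRoot.liftAlgHom_root f _ _
      (by rw [Algebra.toRingHom_ofId, ← aeval_def]; exact haux _)
  have hψbij : Function.Bijective ψ := by
    constructor
    · rw [injective_iff_map_eq_one]
      intro k hk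
      have hroot : ψ k x = x := by rw [hk]; rfl
      rw [hψroot] at hroot
      have h0 : (Multiplicative.toAdd k).val = 0 :=
        huniq _ 0 (ZMod.val_lt _) hn (by simpa using hroot)
      have : Multiplicative.toAdd k = 0 := (ZMod.val_eq_zero _).mp h0
      rw [← ofAdd_toAdd k, this, ofAdd_zero]
    · intro σ
      have hσn : (σ x) ^ n = algebraMap A B π := by
        rw [← map_pow, hxn, AlgEquiv.commutes]
      obtain ⟨i, hi, hy⟩ := hclass _ hσn
      refine ⟨Multiplicative.ofAdd (i : ZMod n), ?_⟩
      apply AlgEquiv.coe_algHom_injective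
      apply AdjoinRoot.algHom_ext
      show ψ _ x = σ x
      rw [hψroot, hy, toAdd_ofAdd, ZMod.val_natCast, hmodpow]
  refine ⟨⟨(MulEquiv.ofBijective ψ hψbij).symm⟩, ?_⟩
  intro σ
  have hσn : (σ x) ^ n = algebraMap A B π := by
    rw [← map_pow, hxn, AlgEquiv.commutes]
  obtain ⟨i, hi, hy⟩ := hclass _ hσn
  refine ⟨(i : ZMod n), ?_, ?_⟩
  · show σ x = ζ' ^ (ZMod.val (i : ZMod n)) * x
    rw [hy, ZMod.val_natCast, hmodpow]
  · intro k hk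
    replace hk : σ x = ζ' ^ k.val * x := hk
    have : ζ' ^ k.val * x = ζ' ^ ((i : ZMod n)).val * x := by
      rw [← hk, hy, ZMod.val_natCast, hmodpow]
    have hval : k.val = ((i : ZMod n)).val :=
      huniq _ _ (ZMod.val_lt _) (ZMod.val_lt _) this
    exact ZMod.val_injective n hval
end
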